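/- (Self-adjointness of the discrete ABR fractional Sturm–Liouville operator) Let a, b ∈ ℤ with b - a ≥ 2, α ∈ (0,1/2), B(α) > 0, p, q : {a,...,b} → ℝ with p > 0, and define L₂x(t) = ^{ABR}_a∇^α (p(t) · ^{ABR}∇_b^α x(t)) + q(t)x(t) for t ∈ {a+1,...,b-1}. Then for all complex-valued functions u, v on {a,...,b}, Σ_{t=a+1}^{b-1} \overline{L₂u(t)} v(t) = Σ_{t=a+1}^{b-1} \overline{u(t)} L₂v(t). -/

import Mathlib

open ComplexConjugate

/-- Nabla discrete Mittag-Leffler function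
`E_{\overline{α}}(λ, z) = Σ_{k=0}^∞ λ^k Γ(z+kα)/(Γ(z)Γ(kα+1))`. -/
noncomputable def dML (α lam z : ℝ) : ℝ :=
  ∑' k : ℕ, lam ^ k * (Real.Gamma (z + k * α) / Real.Gamma z) / Real.Gamma (k * α + 1)

/-- Left ABR nabla fractional difference (complex-valued functions). -/
noncomputable def ABRnablaLeftC (B α : ℝ) (a : ℤ) (g : ℤ → ℂ) (t : ℤ) : ℂ :=
  ((B / (1 - α) : ℝ) : ℂ) *
    ((fun τ : ℤ => ∑ s ∈ Finset.Icc (a + 1) τ,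
        g s * ((dML α (-(α / (1 - α))) ((τ : ℝ) - (s : ℝ) + 1) : ℝ) : ℂ)) t
     - (fun τ : ℤ => ∑ s ∈ Finset.Icc (a + 1) τ,
        g s * ((dML α (-(α / (1 - α))) ((τ : ℝ) - (s : ℝ) + 1) : ℝ) : ℂ)) (t - 1))

/-- Right ABR nabla fractional difference (complex-valued functions). -/
noncomputable def ABRnablaRightC (B α : ℝ) (b : ℤ) (f : ℤ → ℂ) (t : ℤ) : ℂ :=
  -((B / (1 - α) : ℝ) : ℂ) *
    ((fun τ : ℤ => ∑ s ∈ Finset.Icc τ (b - 1),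
        f s * ((dML α (-(α / (1 - α))) ((s : ℝ) - (τ : ℝ) + 1) : ℝ) : ℂ)) (t + 1)
     - (fun τ : ℤ => ∑ s ∈ Finset.Icc τ (b - 1),
        f s * ((dML α (-(α / (1 - α))) ((s : ℝ) - (τ : ℝ) + 1) : ℝ) : ℂ)) t)

/-- The discrete fractional Sturm–Liouville operator
`L₂ x(t) = ^{ABR}_a∇^α (p(t) ^{ABR}∇_b^α x(t)) + q(t) x(t)`. -/
noncomputable def dSLopC (B α : ℝ) (a b : ℤ) (p q : ℤ → ℝ) (x : ℤ → ℂ) (t : ℤ) : ℂ :=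
  ABRnablaLeftC B α a (fun s => (p s : ℂ) * ABRnablaRightC B α b x s) t + (q t : ℂ) * x t

/-- Self-adjointness of the discrete ABR fractional Sturm–Liouville operator with
respect to `⟨u,v⟩ = Σ_{t=a+1}^{b-1} conj u(t) v(t)`. -/
private lemma tri_sum (A c : ℤ) (h : ℤ → ℤ → ℂ) :
    ∑ t ∈ Finset.Icc A c, ∑ s ∈ Finset.Icc A t, h t s
      = ∑ s ∈ Finset.Icc A c, ∑ t ∈ Finset.Icc s c, h t s := by
  have h1 : ∀ t ∈ Finset.Icc A c, ∑ s ∈ Finset.Icc A t, h t s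
      = ∑ s ∈ Finset.Icc A c, if s ≤ t then h t s else 0 := by
    intro t ht
    rw [Finset.mem_Icc] at ht
    rw [← Finset.sum_filter]
    refine Finset.sum_congr ?_ fun _ _ => rfl
    ext s
    simp only [Finset.mem_Icc, Finset.mem_filter]
    omega
  rw [Finset.sum_congr rfl h1, Finset.sum_comm]
  refine Finset.sum_congr rfl fun s hs => ?_
  rw [Finset.mem_Icc] at hs
  rw [← Finset.sum_filter]
  refine Finset.sum_congr ?_ fun _ _ => rfl
  ext t
  simp only [Finset.mem_Icc, Finset.mem_filter]
  omega

private lemma tri_sum' (A c : ℤ) (h : ℤ → ℤ → ℂ) :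
    ∑ t ∈ Finset.Icc A c, ∑ s ∈ Finset.Icc A (t - 1), h t s
      = ∑ s ∈ Finset.Icc A c, ∑ t ∈ Finset.Icc (s + 1) c, h t s := by
  have h1 : ∀ t ∈ Finset.Icc A c, ∑ s ∈ Finset.Icc A (t - 1), h t s
      = ∑ s ∈ Finset.Icc A c, if s + 1 ≤ t then h t s else 0 := by
    intro t ht
    rw [Finset.mem_Icc] at ht
    rw [← Finset.sum_filter]
    refine Finset.sum_congr ?_ fun _ _ => rfl
    ext s
    simp only [Finset.mem_Icc, Finset.mem_filter]
    omega
  rw [Finset.sum_congr rfl h1, Finset.sum_comm]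
  refine Finset.sum_congr rfl fun s hs => ?_
  rw [Finset.mem_Icc] at hs
  rw [← Finset.sum_filter]
  refine Finset.sum_congr ?_ fun _ _ => rfl
  ext t
  simp only [Finset.mem_Icc, Finset.mem_filter]
  omega

private lemma sbp (B α : ℝ) (a b : ℤ) (f g : ℤ → ℂ) :
    ∑ t ∈ Finset.Icc (a + 1) (b - 1), f t * ABRnablaLeftC B α a g t
      = ∑ t ∈ Finset.Icc (a + 1) (b - 1), g t * ABRnablaRightC B α b f t := by
  set lam := -(α / (1 - α)) with hlam
  set C : ℂ := ((B / (1 - α) : ℝ) : ℂ) with hC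
  set K : ℤ → ℤ → ℂ := fun t s => ((dML α lam ((t : ℝ) - (s : ℝ) + 1) : ℝ) : ℂ) with hK
  have hL : ∀ t, ABRnablaLeftC B α a g t
      = C * ((∑ s ∈ Finset.Icc (a + 1) t, g s * K t s)
            - ∑ s ∈ Finset.Icc (a + 1) (t - 1), g s * K (t - 1) s) := fun t => rfl
  have hR : ∀ t, ABRnablaRightC B α b f t
      = -C * ((∑ s ∈ Finset.Icc (t + 1) (b - 1), f s * K s (t + 1))
            - ∑ s ∈ Finset.Icc t (b - 1), f s * K s t) := fun t => rfl
  have key1 : ∑ t ∈ Finset.Icc (a + 1) (b - 1), ∑ s ∈ Finset.Icc (a + 1) t,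
        f t * (g s * K t s)
      = ∑ t ∈ Finset.Icc (a + 1) (b - 1), ∑ s ∈ Finset.Icc t (b - 1),
        g t * (f s * K s t) := by
    rw [tri_sum]
    refine Finset.sum_congr rfl fun s _ => Finset.sum_congr rfl fun t _ => by ring
  have key2 : ∑ t ∈ Finset.Icc (a + 1) (b - 1), ∑ s ∈ Finset.Icc (a + 1) (t - 1),
        f t * (g s * K (t - 1) s)
      = ∑ t ∈ Finset.Icc (a + 1) (b - 1), ∑ s ∈ Finset.Icc (t + 1) (b - 1),
        g t * (f s * K s (t + 1)) := by
    rw [tri_sum']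
    refine Finset.sum_congr rfl fun s _ => Finset.sum_congr rfl fun t _ => ?_
    have harg : ((t - 1 : ℤ) : ℝ) - (s : ℝ) + 1 = ((t : ℤ) : ℝ) - ((s + 1 : ℤ) : ℝ) + 1 := by
      push_cast; ring
    have hKe : K (t - 1) s = K t (s + 1) := by simp only [hK, harg]
    rw [hKe]; ring
  calc ∑ t ∈ Finset.Icc (a + 1) (b - 1), f t * ABRnablaLeftC B α a g t
      = C * ((∑ t ∈ Finset.Icc (a + 1) (b - 1), ∑ s ∈ Finset.Icc (a + 1) t,
              f t * (g s * K t s))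
           - ∑ t ∈ Finset.Icc (a + 1) (b - 1), ∑ s ∈ Finset.Icc (a + 1) (t - 1),
              f t * (g s * K (t - 1) s)) := by
        rw [mul_sub, Finset.mul_sum, Finset.mul_sum, ← Finset.sum_sub_distrib]
        refine Finset.sum_congr rfl fun t _ => ?_
        rw [hL t]
        simp only [← Finset.mul_sum]
        ring
    _ = C * ((∑ t ∈ Finset.Icc (a + 1) (b - 1), ∑ s ∈ Finset.Icc t (b - 1),
              g t * (f s * K s t))
           - ∑ t ∈ Finset.Icc (a + 1) (b - 1), ∑ s ∈ Finset.Icc (t + 1) (b - 1),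
              g t * (f s * K s (t + 1))) := by rw [key1, key2]
    _ = ∑ t ∈ Finset.Icc (a + 1) (b - 1), g t * ABRnablaRightC B α b f t := by
        rw [mul_sub, Finset.mul_sum, Finset.mul_sum, ← Finset.sum_sub_distrib]
        refine Finset.sum_congr rfl fun t _ => ?_
        rw [hR t]
        simp only [← Finset.mul_sum]
        ring

private lemma conj_right (B α : ℝ) (b : ℤ) (x : ℤ → ℂ) (t : ℤ) :
    conj (ABRnablaRightC B α b x t) = ABRnablaRightC B α b (fun s => conj (x s)) t := by
  simp [ABRnablaRightC, map_sum, Complex.conj_ofReal]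

private lemma conj_left (B α : ℝ) (a : ℤ) (x : ℤ → ℂ) (t : ℤ) :
    conj (ABRnablaLeftC B α a x t) = ABRnablaLeftC B α a (fun s => conj (x s)) t := by
  simp [ABRnablaLeftC, map_sum, Complex.conj_ofReal]

private lemma conj_dSLop (B α : ℝ) (a b : ℤ) (p q : ℤ → ℝ) (x : ℤ → ℂ) (t : ℤ) :
    conj (dSLopC B α a b p q x t) = dSLopC B α a b p q (fun s => conj (x s)) t := by
  simp only [dSLopC, map_add, map_mul, conj_left, Complex.conj_ofReal]
  congr 1
  refine congrArg (fun f => ABRnablaLeftC B α a f t) ?_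
  funext s
  simp [conj_right, Complex.conj_ofReal]

theorem dSLop_self_adjoint (a b : ℤ) (hab : 2 ≤ b - a) (α B : ℝ)
    (hα0 : 0 < α) (hα2 : α < 1 / 2) (hB : 0 < B)
    (p q : ℤ → ℝ) (hppos : ∀ t, 0 < p t) (u v : ℤ → ℂ) :
    (∑ t ∈ Finset.Icc (a + 1) (b - 1), conj (dSLopC B α a b p q u t) * v t)
      = ∑ t ∈ Finset.Icc (a + 1) (b - 1), conj (u t) * dSLopC B α a b p q v t := by
  simp only [conj_dSLop]
  simp only [dSLopC, add_mul, mul_add, Finset.sum_add_distrib]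
  congr 1
  · have h1 := sbp B α a b v
      (fun s => ((p s : ℝ) : ℂ) * ABRnablaRightC B α b (fun r => conj (u r)) s)
    have h2 := sbp B α a b (fun s => conj (u s))
      (fun s => ((p s : ℝ) : ℂ) * ABRnablaRightC B α b v s)
    calc ∑ t ∈ Finset.Icc (a + 1) (b - 1),
          ABRnablaLeftC B α a
            (fun s => ((p s : ℝ) : ℂ) * ABRnablaRightC B α b (fun r => conj (u r)) s) t * v t
        = ∑ t ∈ Finset.Icc (a + 1) (b - 1),
            v t * ABRnablaLeftC B α a
              (fun s => ((p s : ℝ) : ℂ) * ABRnablaRightC B α b (fun r => conj (u r)) s) t := by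
          exact Finset.sum_congr rfl fun t _ => mul_comm _ _
      _ = ∑ t ∈ Finset.Icc (a + 1) (b - 1),
            (((p t : ℝ) : ℂ) * ABRnablaRightC B α b (fun r => conj (u r)) t)
              * ABRnablaRightC B α b v t := h1
      _ = ∑ t ∈ Finset.Icc (a + 1) (b - 1),
            (((p t : ℝ) : ℂ) * ABRnablaRightC B α b v t)
              * ABRnablaRightC B α b (fun r => conj (u r)) t := by
          exact Finset.sum_congr rfl fun t _ => by ring
      _ = ∑ t ∈ Finset.Icc (a + 1) (b - 1),
            conj (u t) * ABRnablaLeftC B α a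
              (fun s => ((p s : ℝ) : ℂ) * ABRnablaRightC B α b v s) t := by
          rw [← h2]
  · exact Finset.sum_congr rfl fun t _ => by ring
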